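/- (Null space nontriviality from RUB-type bound) Let 0 < p ≤ q ≤ 1, r a positive integer, s = kr with k > 1 an integer multiple condition (kr ∈ ℤ₊). Suppose R ∈ ℝ^{m×n} satisfies 𝒜(R) = 0 and ‖R_{−max(r)}‖_{S_p}^p ≤ ‖R_{max(r)}‖_{S_p}^p, where 𝒜 satisfies the ℓ_q-RUB of order r + s with constants C₁, C₂ and C₂/C₁ < (s/r)^{(1/p−1/2)q}. Then R = 0. -/

import Mathlib

open scoped BigOperators

open scoped NNReal
open Matrix

private lemma real_rpow_add_le {t : ℝ} (ht0 : 0 < t) (ht1 : t ≤ 1) {x y : ℝ}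
    (hx : 0 ≤ x) (hy : 0 ≤ y) : (x + y) ^ t ≤ x ^ t + y ^ t := by
  have h := NNReal.rpow_add_le_add_rpow x.toNNReal y.toNNReal ht0.le ht1
  have h2 : (((x.toNNReal + y.toNNReal) ^ t : ℝ≥0) : ℝ) ≤
      ((x.toNNReal ^ t + y.toNNReal ^ t : ℝ≥0) : ℝ) := by exact_mod_cast h
  rwa [NNReal.coe_rpow, NNReal.coe_add, NNReal.coe_add, NNReal.coe_rpow, NNReal.coe_rpow,
    Real.coe_toNNReal x hx, Real.coe_toNNReal y hy] at h2

private lemma real_add_rpow_le {t : ℝ} (ht : 1 ≤ t) {x y : ℝ}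
    (hx : 0 ≤ x) (hy : 0 ≤ y) : x ^ t + y ^ t ≤ (x + y) ^ t := by
  have h := NNReal.add_rpow_le_rpow_add x.toNNReal y.toNNReal ht
  have h2 : ((x.toNNReal ^ t + y.toNNReal ^ t : ℝ≥0) : ℝ) ≤
      (((x.toNNReal + y.toNNReal) ^ t : ℝ≥0) : ℝ) := by exact_mod_cast h
  rwa [NNReal.coe_rpow, NNReal.coe_add, NNReal.coe_add, NNReal.coe_rpow, NNReal.coe_rpow,
    Real.coe_toNNReal x hx, Real.coe_toNNReal y hy] at h2

private lemma abs_sum_rpow_le {ι : Type*} (s : Finset ι) (g : ι → ℝ) {t : ℝ}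
    (ht0 : 0 < t) (ht1 : t ≤ 1) :
    |∑ i ∈ s, g i| ^ t ≤ ∑ i ∈ s, |g i| ^ t := by
  classical
  induction s using Finset.induction_on with
  | empty => simp [Real.zero_rpow ht0.ne']
  | insert a s' ha ih =>
    rw [Finset.sum_insert ha, Finset.sum_insert ha]
    calc |g a + ∑ i ∈ s', g i| ^ t ≤ (|g a| + |∑ i ∈ s', g i|) ^ t := by
          exact Real.rpow_le_rpow (abs_nonneg _) (abs_add_le _ _) ht0.le
      _ ≤ |g a| ^ t + |∑ i ∈ s', g i| ^ t :=
          real_rpow_add_le ht0 ht1 (abs_nonneg _) (abs_nonneg _)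
      _ ≤ |g a| ^ t + ∑ i ∈ s', |g i| ^ t := by linarith

private lemma sum_rpow_le_rpow_sum {ι : Type*} (s : Finset ι) (g : ι → ℝ)
    (hg : ∀ i ∈ s, 0 ≤ g i) {t : ℝ} (ht : 1 ≤ t) :
    ∑ i ∈ s, g i ^ t ≤ (∑ i ∈ s, g i) ^ t := by
  classical
  induction s using Finset.induction_on with
  | empty => simp [Real.zero_rpow (by linarith : t ≠ 0)]
  | insert a s' ha ih =>
    have hga : 0 ≤ g a := hg a (Finset.mem_insert_self _ _)
    have hg' : ∀ i ∈ s', 0 ≤ g i := fun i hi => hg i (Finset.mem_insert_of_mem hi)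
    have hsum : 0 ≤ ∑ i ∈ s', g i := Finset.sum_nonneg hg'
    rw [Finset.sum_insert ha, Finset.sum_insert ha]
    calc g a ^ t + ∑ i ∈ s', g i ^ t ≤ g a ^ t + (∑ i ∈ s', g i) ^ t := by
          linarith [ih hg']
      _ ≤ (g a + ∑ i ∈ s', g i) ^ t := real_add_rpow_le ht hga hsum

private lemma sum_rpow_le_card_mul {ι : Type*} (s : Finset ι) (g : ι → ℝ)
    (hg : ∀ i ∈ s, 0 ≤ g i) {u : ℝ} (hu0 : 0 < u) (hu1 : u ≤ 1) :
    ∑ i ∈ s, g i ^ u ≤ (s.card : ℝ) ^ (1 - u) * (∑ i ∈ s, g i) ^ u := by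
  classical
  rcases s.eq_empty_or_nonempty with rfl | hne
  · simp only [Finset.sum_empty]
    exact mul_nonneg (Real.rpow_nonneg (by positivity) _) (Real.rpow_nonneg le_rfl _)
  · have hN : (0:ℝ) < s.card := by exact_mod_cast Finset.card_pos.mpr hne
    have hw : ∑ _i ∈ s, (1 / (s.card : ℝ)) = 1 := by
      rw [Finset.sum_const, nsmul_eq_mul]; field_simp
    have hz : ∀ i ∈ s, (0:ℝ) ≤ g i ^ u := fun i hi => Real.rpow_nonneg (hg i hi) _
    have hp : (1:ℝ) ≤ 1 / u := by
      rw [le_div_iff₀ hu0]; linarith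
    have h := Real.rpow_arith_mean_le_arith_mean_rpow s (fun _ => 1 / (s.card : ℝ))
      (fun i => g i ^ u) (fun i _ => by positivity) hw hz hp
    have hxu : ∀ i ∈ s, (g i ^ u) ^ (1/u) = g i := by
      intro i hi
      rw [← Real.rpow_mul (hg i hi), mul_one_div_cancel hu0.ne', Real.rpow_one]
    have h2 : (∑ i ∈ s, 1 / (s.card : ℝ) * g i ^ u) ^ (1/u)
        ≤ 1 / (s.card : ℝ) * ∑ i ∈ s, g i := by
      calc (∑ i ∈ s, 1 / (s.card : ℝ) * g i ^ u) ^ (1/u)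
          ≤ ∑ i ∈ s, 1 / (s.card : ℝ) * (g i ^ u) ^ (1/u) := h
        _ = 1 / (s.card : ℝ) * ∑ i ∈ s, g i := by
            rw [← Finset.mul_sum]
            congr 1
            exact Finset.sum_congr rfl fun i hi => by rw [hxu i hi]
    have hS : (0:ℝ) ≤ ∑ i ∈ s, 1 / (s.card : ℝ) * g i ^ u :=
      Finset.sum_nonneg fun i hi => mul_nonneg (by positivity) (hz i hi)
    have h3 : ∑ i ∈ s, 1 / (s.card : ℝ) * g i ^ u ≤ (1 / (s.card : ℝ) * ∑ i ∈ s, g i) ^ u := by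
      have := Real.rpow_le_rpow (Real.rpow_nonneg hS _) h2 hu0.le
      rwa [← Real.rpow_mul hS, one_div_mul_cancel hu0.ne', Real.rpow_one] at this
    have h4 : ∑ i ∈ s, g i ^ u ≤ (s.card : ℝ) * (1 / (s.card : ℝ) * ∑ i ∈ s, g i) ^ u := by
      have h5 := mul_le_mul_of_nonneg_left h3 hN.le
      rw [Finset.mul_sum] at h5
      calc ∑ i ∈ s, g i ^ u = ∑ i ∈ s, (s.card:ℝ) * (1/(s.card:ℝ) * g i ^ u) := by
            refine Finset.sum_congr rfl fun i hi => ?_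
            field_simp
        _ ≤ _ := h5
    calc ∑ i ∈ s, g i ^ u ≤ (s.card : ℝ) * (1 / (s.card : ℝ) * ∑ i ∈ s, g i) ^ u := h4
      _ = (s.card : ℝ) ^ (1 - u) * (∑ i ∈ s, g i) ^ u := by
          rw [Real.mul_rpow (by positivity) (Finset.sum_nonneg hg), one_div,
            Real.inv_rpow hN.le, ← mul_assoc,
            show (s.card:ℝ) * ((s.card:ℝ) ^ u)⁻¹ = (s.card:ℝ) ^ (1 - u) by
              rw [Real.rpow_sub hN, Real.rpow_one]; rfl]

/-- The descending rearrangement of a finite tuple of reals. -/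
noncomputable def sortDesc {N : ℕ} (f : Fin N → ℝ) : Fin N → ℝ :=
  fun j => f (Tuple.sort f j.rev)

/-- The singular values of a real matrix, in nonincreasing order:
`singVal A j` is the `(j+1)`-st largest singular value of `A`. -/
noncomputable def singVal {m n : ℕ} (A : Matrix (Fin m) (Fin n) ℝ) : Fin n → ℝ :=
  sortDesc (fun i => Real.sqrt ((show (A.transpose * A).IsHermitian by
    rw [← Matrix.conjTranspose_eq_transpose_of_trivial]
    exact Matrix.isHermitian_conjTranspose_mul_self A).eigenvalues i))

/-- `schattenP A p = ‖A‖_{S_p}^p`, the sum of the `p`-th powers of the singular values. -/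
noncomputable def schattenP {m n : ℕ} (A : Matrix (Fin m) (Fin n) ℝ) (p : ℝ) : ℝ :=
  ∑ j, (singVal A j) ^ p

/-- `headP A r p = ‖A_{max(r)}‖_{S_p}^p`, the `S_p`-quasi-norm (to the `p`) of the best
rank-`r` approximation of `A`. -/
noncomputable def headP {m n : ℕ} (A : Matrix (Fin m) (Fin n) ℝ) (r : ℕ) (p : ℝ) : ℝ :=
  ∑ j ∈ Finset.univ.filter (fun j : Fin n => (j : ℕ) < r), (singVal A j) ^ p

/-- `tailP A r p = ‖A_{-max(r)}‖_{S_p}^p`, the `S_p`-quasi-norm (to the `p`) of the error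
of the best rank-`r` approximation of `A`. -/
noncomputable def tailP {m n : ℕ} (A : Matrix (Fin m) (Fin n) ℝ) (r : ℕ) (p : ℝ) : ℝ :=
  ∑ j ∈ Finset.univ.filter (fun j : Fin n => r ≤ (j : ℕ)), (singVal A j) ^ p


/-- The permutation sending sorted position to eigenvalue index. -/
noncomputable def eigPerm {m n : ℕ} (A : Matrix (Fin m) (Fin n) ℝ) : Fin n ≃ Fin n :=
  Fin.revPerm.trans
    (Tuple.sort (fun i => Real.sqrt ((Matrix.isHermitian_conjTranspose_mul_self A).eigenvalues i)))

lemma singVal_eq {m n : ℕ} (A : Matrix (Fin m) (Fin n) ℝ) (k : Fin n) :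
    singVal A k =
      Real.sqrt ((Matrix.isHermitian_conjTranspose_mul_self A).eigenvalues (eigPerm A k)) := rfl

lemma singVal_nonneg {m n : ℕ} (A : Matrix (Fin m) (Fin n) ℝ) (k : Fin n) :
    0 ≤ singVal A k := Real.sqrt_nonneg _

lemma singVal_anti {m n : ℕ} (A : Matrix (Fin m) (Fin n) ℝ) {j k : Fin n} (h : j ≤ k) :
    singVal A k ≤ singVal A j := by
  have := Tuple.monotone_sort
    (fun i => Real.sqrt ((Matrix.isHermitian_conjTranspose_mul_self A).eigenvalues i))
  exact this (by simpa [Fin.rev_le_rev] using h : k.rev ≤ j.rev)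

lemma eigenvalues_nonneg' {m n : ℕ} (A : Matrix (Fin m) (Fin n) ℝ) (i : Fin n) :
    0 ≤ (Matrix.isHermitian_conjTranspose_mul_self A).eigenvalues i := by
  exact (Matrix.posSemidef_conjTranspose_mul_self A).eigenvalues_nonneg i

lemma singVal_sq {m n : ℕ} (A : Matrix (Fin m) (Fin n) ℝ) (k : Fin n) :
    singVal A k ^ (2:ℝ) =
      (Matrix.isHermitian_conjTranspose_mul_self A).eigenvalues (eigPerm A k) := by
  rw [singVal_eq, show (2:ℝ) = ((2:ℕ):ℝ) by norm_num, Real.rpow_natCast,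
    Real.sq_sqrt (eigenvalues_nonneg' A _)]

lemma sum_singVal_sq {m n : ℕ} (B : Matrix (Fin m) (Fin n) ℝ) :
    ∑ j, singVal B j ^ (2:ℝ) = (Bᴴ * B).trace := by
  classical
  have hH := Matrix.isHermitian_conjTranspose_mul_self B
  calc ∑ j, singVal B j ^ (2:ℝ) = ∑ j, hH.eigenvalues (eigPerm B j) := by
        exact Finset.sum_congr rfl fun j _ => singVal_sq B j
    _ = ∑ i, hH.eigenvalues i := Equiv.sum_comp (eigPerm B) _
    _ = (Bᴴ * B).trace := by
        conv_rhs => rw [hH.spectral_theorem, Unitary.conjStarAlgAut_apply]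
        rw [Matrix.trace_mul_cycle]
        rw [show star (hH.eigenvectorUnitary : Matrix (Fin n) (Fin n) ℝ) *
              (hH.eigenvectorUnitary : Matrix (Fin n) (Fin n) ℝ) = 1 from
            Matrix.mem_unitaryGroup_iff'.mp hH.eigenvectorUnitary.2, one_mul,
          Matrix.trace_diagonal]
        simp

/-- Compression of `R` onto a set `t` of (sorted) singular-value indices. -/
noncomputable def blockMat {m n : ℕ} (R : Matrix (Fin m) (Fin n) ℝ) (t : Finset (Fin n)) :
    Matrix (Fin m) (Fin n) ℝ :=
  R * (((Matrix.isHermitian_conjTranspose_mul_self R).eigenvectorUnitary :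
      Matrix (Fin n) (Fin n) ℝ) *
    Matrix.diagonal (fun j => if (eigPerm R).symm j ∈ t then (1:ℝ) else 0) *
    star ((Matrix.isHermitian_conjTranspose_mul_self R).eigenvectorUnitary :
      Matrix (Fin n) (Fin n) ℝ))

section BlockMat

variable {m n : ℕ} (R : Matrix (Fin m) (Fin n) ℝ)

private lemma hVV' : star ((Matrix.isHermitian_conjTranspose_mul_self R).eigenvectorUnitary :
      Matrix (Fin n) (Fin n) ℝ) *
    ((Matrix.isHermitian_conjTranspose_mul_self R).eigenvectorUnitary : Matrix (Fin n) (Fin n) ℝ)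
      = 1 :=
  Matrix.mem_unitaryGroup_iff'.mp (Matrix.isHermitian_conjTranspose_mul_self R).eigenvectorUnitary.2

private lemma hVV : ((Matrix.isHermitian_conjTranspose_mul_self R).eigenvectorUnitary :
      Matrix (Fin n) (Fin n) ℝ) *
    star ((Matrix.isHermitian_conjTranspose_mul_self R).eigenvectorUnitary :
      Matrix (Fin n) (Fin n) ℝ) = 1 :=
  Matrix.mem_unitaryGroup_iff.mp (Matrix.isHermitian_conjTranspose_mul_self R).eigenvectorUnitary.2

private lemma sandwich (d f : Fin n → ℝ) :
    (((Matrix.isHermitian_conjTranspose_mul_self R).eigenvectorUnitary : Matrix (Fin n) (Fin n) ℝ) *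
        Matrix.diagonal d *
      star ((Matrix.isHermitian_conjTranspose_mul_self R).eigenvectorUnitary :
        Matrix (Fin n) (Fin n) ℝ)) *
    (((Matrix.isHermitian_conjTranspose_mul_self R).eigenvectorUnitary : Matrix (Fin n) (Fin n) ℝ) *
        Matrix.diagonal f *
      star ((Matrix.isHermitian_conjTranspose_mul_self R).eigenvectorUnitary :
        Matrix (Fin n) (Fin n) ℝ)) =
    ((Matrix.isHermitian_conjTranspose_mul_self R).eigenvectorUnitary : Matrix (Fin n) (Fin n) ℝ) *
        Matrix.diagonal (fun j => d j * f j) *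
      star ((Matrix.isHermitian_conjTranspose_mul_self R).eigenvectorUnitary :
        Matrix (Fin n) (Fin n) ℝ) := by
  set V := ((Matrix.isHermitian_conjTranspose_mul_self R).eigenvectorUnitary :
    Matrix (Fin n) (Fin n) ℝ) with hV
  calc (V * Matrix.diagonal d * star V) * (V * Matrix.diagonal f * star V)
      = V * (Matrix.diagonal d * ((star V * V) * (Matrix.diagonal f * star V))) := by
        simp only [Matrix.mul_assoc]
    _ = V * Matrix.diagonal (fun j => d j * f j) * star V := by
        rw [hVV' R, Matrix.one_mul, ← Matrix.mul_assoc (Matrix.diagonal d),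
          Matrix.diagonal_mul_diagonal, ← Matrix.mul_assoc]

private lemma trace_sandwich (g : Fin n → ℝ) :
    (((Matrix.isHermitian_conjTranspose_mul_self R).eigenvectorUnitary : Matrix (Fin n) (Fin n) ℝ) *
        Matrix.diagonal g *
      star ((Matrix.isHermitian_conjTranspose_mul_self R).eigenvectorUnitary :
        Matrix (Fin n) (Fin n) ℝ)).trace = ∑ j, g j := by
  rw [Matrix.trace_mul_cycle, hVV' R, Matrix.one_mul, Matrix.trace_diagonal]

lemma blockMat_rank_le (t : Finset (Fin n)) : (blockMat R t).rank ≤ t.card := by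
  classical
  unfold blockMat
  refine le_trans (Matrix.rank_mul_le_right _ _) ?_
  refine le_trans (Matrix.rank_mul_le_left _ _) ?_
  refine le_trans (Matrix.rank_mul_le_right _ _) ?_
  rw [Matrix.rank_diagonal]
  have e1 : {j : Fin n // (if (eigPerm R).symm j ∈ t then (1:ℝ) else 0) ≠ 0} ≃
      {j : Fin n // (eigPerm R).symm j ∈ t} :=
    Equiv.subtypeEquivRight (by
      intro x; by_cases h : (eigPerm R).symm x ∈ t <;> simp [h])
  have e2 : {j : Fin n // (eigPerm R).symm j ∈ t} ≃ {k : Fin n // k ∈ t} :=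
    ((eigPerm R).symm.subtypeEquiv (fun a => Iff.rfl)).symm.symm
  rw [Fintype.card_congr (e1.trans e2), Fintype.card_coe]

lemma blockMat_frob (t : Finset (Fin n)) :
    ∑ j, singVal (blockMat R t) j ^ (2:ℝ) = ∑ k ∈ t, singVal R k ^ (2:ℝ) := by
  classical
  rw [sum_singVal_sq]
  set hH := Matrix.isHermitian_conjTranspose_mul_self R with hhH
  set V := (hH.eigenvectorUnitary : Matrix (Fin n) (Fin n) ℝ) with hV
  set d : Fin n → ℝ := fun j => if (eigPerm R).symm j ∈ t then (1:ℝ) else 0 with hd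
  set lam : Fin n → ℝ := hH.eigenvalues with hlam
  have hDd : star (Matrix.diagonal d) = Matrix.diagonal d := by
    ext i j
    by_cases h : i = j
    · subst h; simp [Matrix.star_apply, Matrix.diagonal_apply]
    · simp [Matrix.star_apply, Matrix.diagonal_apply, h, Ne.symm h]
  have hdsymm : (V * Matrix.diagonal d * star V)ᴴ = V * Matrix.diagonal d * star V := by
    simp only [← Matrix.star_eq_conjTranspose, StarMul.star_mul, star_star, hDd,
      Matrix.mul_assoc]
  have hco : (RCLike.ofReal ∘ hH.eigenvalues : Fin n → ℝ) = hH.eigenvalues := by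
    funext j; simp
  have hspec : Rᴴ * R = V * Matrix.diagonal lam * star V := by
    conv_lhs => rw [hH.spectral_theorem, Unitary.conjStarAlgAut_apply]
    rw [hco]
  have hexpand : (blockMat R t)ᴴ * blockMat R t =
      V * Matrix.diagonal (fun j => d j * (lam j * d j)) * star V := by
    unfold blockMat
    rw [Matrix.conjTranspose_mul, hdsymm]
    calc (V * Matrix.diagonal d * star V) * Rᴴ * (R * (V * Matrix.diagonal d * star V))
        = (V * Matrix.diagonal d * star V) * (Rᴴ * R) * (V * Matrix.diagonal d * star V) := by
          simp only [Matrix.mul_assoc]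
      _ = (V * Matrix.diagonal d * star V) * ((V * Matrix.diagonal lam * star V) *
            (V * Matrix.diagonal d * star V)) := by rw [hspec, Matrix.mul_assoc]
      _ = (V * Matrix.diagonal d * star V) *
            (V * Matrix.diagonal (fun j => lam j * d j) * star V) := by rw [sandwich R]
      _ = V * Matrix.diagonal (fun j => d j * (lam j * d j)) * star V := by rw [sandwich R]
  rw [hexpand, trace_sandwich R]
  have hterm : ∀ j : Fin n, d j * (lam j * d j) = if (eigPerm R).symm j ∈ t then lam j else 0 := by
    intro j
    by_cases h : (eigPerm R).symm j ∈ t <;> simp [hd, h]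
  calc ∑ j, d j * (lam j * d j) = ∑ j, if (eigPerm R).symm j ∈ t then lam j else 0 :=
        Finset.sum_congr rfl fun j _ => hterm j
    _ = ∑ k, if k ∈ t then lam (eigPerm R k) else 0 := by
        rw [← Equiv.sum_comp (eigPerm R) (fun j => if (eigPerm R).symm j ∈ t then lam j else 0)]
        exact Finset.sum_congr rfl fun k _ => by simp
    _ = ∑ k ∈ t, lam (eigPerm R k) := by
        rw [Finset.sum_ite_mem, Finset.univ_inter]
    _ = ∑ k ∈ t, singVal R k ^ (2:ℝ) :=
        Finset.sum_congr rfl fun k _ => (singVal_sq R k).symm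

lemma blockMat_partition {ι : Type*} (I : Finset ι) (t : ι → Finset (Fin n))
    (h : ∀ k : Fin n, ∑ i ∈ I, (if k ∈ t i then (1:ℝ) else 0) = 1) :
    ∑ i ∈ I, blockMat R (t i) = R := by
  classical
  unfold blockMat
  rw [← Matrix.mul_sum]
  have : ∑ i ∈ I, (((Matrix.isHermitian_conjTranspose_mul_self R).eigenvectorUnitary :
        Matrix (Fin n) (Fin n) ℝ) *
      Matrix.diagonal (fun j => if (eigPerm R).symm j ∈ t i then (1:ℝ) else 0) *
      star ((Matrix.isHermitian_conjTranspose_mul_self R).eigenvectorUnitary :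
        Matrix (Fin n) (Fin n) ℝ)) = 1 := by
    rw [← Finset.sum_mul, ← Finset.mul_sum]
    have hdsum : (∑ i ∈ I, Matrix.diagonal fun j =>
        if (eigPerm R).symm j ∈ t i then (1:ℝ) else 0) = Matrix.diagonal (fun _ => (1:ℝ)) := by
      ext a b
      rw [Matrix.sum_apply]
      by_cases hab : a = b
      · subst hab
        simp only [Matrix.diagonal_apply_eq]
        exact h ((eigPerm R).symm a)
      · simp [Matrix.diagonal_apply_ne _ hab]
    rw [hdsum, Matrix.diagonal_one, Matrix.mul_one, hVV R]
  rw [this, Matrix.mul_one]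

end BlockMat

/-- Positions `a ≤ k < b` among `Fin n`. -/
def posSet (n a b : ℕ) : Finset (Fin n) :=
  Finset.univ.filter (fun k : Fin n => a ≤ (k:ℕ) ∧ (k:ℕ) < b)

lemma mem_posSet {n a b : ℕ} {k : Fin n} : k ∈ posSet n a b ↔ a ≤ (k:ℕ) ∧ (k:ℕ) < b := by
  simp [posSet]

lemma posSet_card_le (n a b : ℕ) : (posSet n a b).card ≤ b - a := by
  have h : (posSet n a b).card ≤ (Finset.Ico a b).card := by
    refine Finset.card_le_card_of_injOn (fun k => (k:ℕ)) ?_ ?_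
    · intro k hk
      simp only [Finset.coe_Ico, Set.mem_Ico, Finset.mem_Ico]
      exact mem_posSet.mp hk
    · intro x _ y _ hxy
      exact Fin.val_injective hxy
  simpa [Nat.card_Ico] using h

lemma posSet_card_eq {n a b : ℕ} (hb : b ≤ n) : (posSet n a b).card = b - a := by
  rw [← Nat.card_Ico a b]
  refine Finset.card_bij (fun (k : Fin n) _ => (k:ℕ)) ?_ ?_ ?_
  · intro k hk
    rw [Finset.mem_Ico]
    exact mem_posSet.mp hk
  · intro x _ y _ hxy
    exact Fin.val_injective hxy
  · intro c hc
    rw [Finset.mem_Ico] at hc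
    exact ⟨⟨c, lt_of_lt_of_le hc.2 hb⟩, mem_posSet.mpr ⟨hc.1, hc.2⟩, rfl⟩

lemma partOne {r s : ℕ} (hs : 0 < s) (M' c : ℕ) (h1 : r ≤ c) (h2 : c < r + M' * s) :
    ∑ j ∈ Finset.range M', (if r + j * s ≤ c ∧ c < r + (j + 1) * s then (1:ℝ) else 0) = 1 := by
  classical
  rw [Finset.sum_boole]
  have hfil : (Finset.range M').filter (fun j => r + j * s ≤ c ∧ c < r + (j + 1) * s)
      = {(c - r) / s} := by
    ext j
    simp only [Finset.mem_filter, Finset.mem_range, Finset.mem_singleton]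
    constructor
    · rintro ⟨_, hj1, hj2⟩
      have ha : j * s ≤ c - r := Nat.le_sub_of_add_le (by rwa [add_comm] at hj1)
      have hb : c - r < (j + 1) * s := (tsub_lt_iff_left h1).mpr hj2
      exact (Nat.div_eq_of_lt_le ha hb).symm
    · rintro rfl
      set i0 := (c - r) / s with hi0
      have hd1 : i0 * s ≤ c - r := Nat.div_mul_le_self (c - r) s
      have hd2 : c - r < (i0 + 1) * s := by
        have hmod := Nat.div_add_mod (c - r) s
        have hlt := Nat.mod_lt (c - r) hs
        calc c - r = s * i0 + (c - r) % s := hmod.symm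
          _ < s * i0 + s := by omega
          _ = (i0 + 1) * s := by ring
      have hm1 : r + i0 * s ≤ c := by
        have h := Nat.add_le_add_left hd1 r
        rwa [Nat.add_sub_cancel' h1] at h
      have hm2 : c < r + (i0 + 1) * s := by
        have h := Nat.add_lt_add_left hd2 r
        rwa [Nat.add_sub_cancel' h1] at h
      have hM : i0 < M' := by
        rw [hi0, Nat.div_lt_iff_lt_mul hs]
        have : c - r < M' * s := (tsub_lt_iff_left h1).mpr h2
        omega
      exact ⟨hM, hm1, hm2⟩
  rw [hfil]
  simp

theorem nullspace_trivial_from_rub (m n L r s kk : ℕ) (hr : 0 < r) (hL : 0 < L)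
    (hkk : 1 < kk) (hs : s = kk * r)
    (p q C₁ C₂ : ℝ) (hp : 0 < p) (hpq : p ≤ q) (hq1 : q ≤ 1)
    (hC₁ : 0 < C₁) (hC₂ : 0 < C₂)
    (hratio : C₂ / C₁ < ((s : ℝ) / r) ^ ((1 / p - 1 / 2) * q))
    (A : Matrix (Fin m) (Fin n) ℝ →ₗ[ℝ] (Fin L → ℝ))
    (hRUB : ∀ Z : Matrix (Fin m) (Fin n) ℝ, Z.rank ≤ r + s →
        C₁ * ((∑ j, (singVal Z j) ^ (2 : ℝ)) ^ (q / 2)) ≤ (∑ j, |A Z j| ^ q) / L ∧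
        (∑ j, |A Z j| ^ q) / L ≤ C₂ * ((∑ j, (singVal Z j) ^ (2 : ℝ)) ^ (q / 2)))
    (R : Matrix (Fin m) (Fin n) ℝ) (hker : A R = 0)
    (hcone : tailP R r p ≤ headP R r p) :
    R = 0 := by

  classical
  have hq0 : 0 < q := lt_of_lt_of_le hp hpq
  have hs0 : 0 < s := by rw [hs]; exact Nat.mul_pos (by omega) hr
  set σ : Fin n → ℝ := singVal R with hσdef
  have hσ0 : ∀ k, 0 ≤ σ k := fun k => singVal_nonneg R k
  -- blocks
  set Tt : ℕ → Finset (Fin n) := fun j => posSet n (r + j * s) (r + (j + 1) * s) with hTtdef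
  set Zt : Finset (Fin n) := posSet n 0 (r + s) with hZtdef
  set tfam : ℕ → Finset (Fin n) := fun i => if i = 0 then Zt else Tt i with htfamdef
  set TT : ℕ → ℝ := fun j => ∑ k ∈ Tt j, σ k ^ p with hTTdef
  set UU : ℕ → ℝ := fun j => ∑ k ∈ Tt j, σ k ^ (2:ℝ) with hUUdef
  set F : ℝ := ∑ k ∈ Zt, σ k ^ (2:ℝ) with hFdef
  set G : ℝ := ∑ k ∈ posSet n 0 r, σ k ^ (2:ℝ) with hGdef
  have hTT0 : ∀ j, 0 ≤ TT j := fun j => Finset.sum_nonneg fun k _ => Real.rpow_nonneg (hσ0 k) _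
  have hF0 : 0 ≤ F := Finset.sum_nonneg fun k _ => Real.rpow_nonneg (hσ0 k) _
  have hG0 : 0 ≤ G := Finset.sum_nonneg fun k _ => Real.rpow_nonneg (hσ0 k) _
  have htailP0 : 0 ≤ tailP R r p :=
    Finset.sum_nonneg fun k _ => Real.rpow_nonneg (hσ0 k) _
  have hheadP0 : 0 ≤ headP R r p :=
    Finset.sum_nonneg fun k _ => Real.rpow_nonneg (hσ0 k) _
  -- partition of indicator functions
  have hpart : ∀ k : Fin n, ∑ i ∈ Finset.range (n + 1),
      (if k ∈ tfam i then (1:ℝ) else 0) = 1 := by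
    intro k
    have hc : (k : ℕ) < n := k.isLt
    rw [Finset.sum_range_succ']
    by_cases hrc : r ≤ (k : ℕ)
    · have hconv : ∀ i, (if k ∈ tfam (i + 1) then (1:ℝ) else 0) =
          (if r + (i+1) * s ≤ (k:ℕ) ∧ (k:ℕ) < r + ((i+1) + 1) * s then (1:ℝ) else 0) := by
        intro i
        simp only [htfamdef, Nat.succ_ne_zero, if_false, hTtdef, mem_posSet]
      have h0 : (if k ∈ tfam 0 then (1:ℝ) else 0) =
          (if r + 0 * s ≤ (k:ℕ) ∧ (k:ℕ) < r + (0 + 1) * s then (1:ℝ) else 0) := by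
        simp only [htfamdef, if_pos rfl, hZtdef, mem_posSet]
        simp [hrc]
      have hss := Finset.sum_range_succ'
        (fun j => if r + j * s ≤ (k:ℕ) ∧ (k:ℕ) < r + (j + 1) * s then (1:ℝ) else 0) n
      rw [h0, Finset.sum_congr rfl (fun i _ => hconv i), ← hss]
      exact partOne hs0 (n + 1) (k:ℕ) hrc
        (lt_of_lt_of_le hc (le_trans (Nat.le_succ n)
          (le_trans (Nat.le_mul_of_pos_right (n+1) hs0) (Nat.le_add_left _ r))))
    · have h0 : k ∈ tfam 0 := by
        simp only [htfamdef, if_pos rfl, hZtdef, mem_posSet]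
        omega
      have hT : ∀ i ∈ Finset.range n, (if k ∈ tfam (i + 1) then (1:ℝ) else 0) = 0 := by
        intro i _
        have hnm : k ∉ tfam (i + 1) := by
          simp only [htfamdef, Nat.succ_ne_zero, if_false, hTtdef, mem_posSet]
          rintro ⟨hle, -⟩
          exact hrc (le_trans (Nat.le_add_right r _) hle)
        simp [hnm]
      rw [Finset.sum_congr rfl hT, Finset.sum_const, smul_zero, if_pos h0]
      norm_num
  -- tailP decomposition
  have htailP : tailP R r p = ∑ j ∈ Finset.range n, TT j := by
    have hconv : ∀ k : Fin n, (if r ≤ (k:ℕ) then σ k ^ p else 0) =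
        ∑ j ∈ Finset.range n, (if k ∈ Tt j then σ k ^ p else 0) := by
      intro k
      have hc : (k : ℕ) < n := k.isLt
      by_cases hrc : r ≤ (k : ℕ)
      · rw [if_pos hrc]
        have h1 : ∀ j, (if k ∈ Tt j then σ k ^ p else 0) =
            σ k ^ p * (if r + j * s ≤ (k:ℕ) ∧ (k:ℕ) < r + (j + 1) * s then (1:ℝ) else 0) := by
          intro j
          simp only [hTtdef, mem_posSet]
          by_cases h : r + j * s ≤ (k:ℕ) ∧ (k:ℕ) < r + (j + 1) * s <;> simp [h]
        rw [Finset.sum_congr rfl (fun j _ => h1 j), ← Finset.mul_sum,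
          partOne hs0 n (k:ℕ) hrc
            (lt_of_lt_of_le hc (le_trans (Nat.le_mul_of_pos_right n hs0) (Nat.le_add_left _ r))),
          mul_one]
      · rw [if_neg hrc]
        symm
        apply Finset.sum_eq_zero
        intro j _
        have hnm : k ∉ Tt j := by
          simp only [hTtdef, mem_posSet]
          rintro ⟨hle, -⟩
          exact hrc (le_trans (Nat.le_add_right r _) hle)
        simp [hnm]
    calc tailP R r p = ∑ k : Fin n, (if r ≤ (k:ℕ) then σ k ^ p else 0) := by
          rw [tailP, Finset.sum_filter]
      _ = ∑ k : Fin n, ∑ j ∈ Finset.range n, (if k ∈ Tt j then σ k ^ p else 0) :=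
          Finset.sum_congr rfl fun k _ => hconv k
      _ = ∑ j ∈ Finset.range n, ∑ k : Fin n, (if k ∈ Tt j then σ k ^ p else 0) :=
          Finset.sum_comm
      _ = ∑ j ∈ Finset.range n, TT j := by
          refine Finset.sum_congr rfl fun j _ => ?_
          rw [Finset.sum_ite_mem, Finset.univ_inter]
  -- headP as sum over posSet
  have hposhead : posSet n 0 r = Finset.univ.filter (fun j : Fin n => (j : ℕ) < r) := by
    ext k; simp [posSet]
  have hheadP_eq : headP R r p = ∑ k ∈ posSet n 0 r, σ k ^ p := by
    rw [headP, hposhead]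
  -- RUB on the head block
  have hZcard : Zt.card ≤ r + s := by
    have := posSet_card_le n 0 (r + s)
    simpa using this
  have hZrank : (blockMat R Zt).rank ≤ r + s := le_trans (blockMat_rank_le R Zt) hZcard
  have hZfro : ∑ j, singVal (blockMat R Zt) j ^ (2:ℝ) = F := blockMat_frob R Zt
  have hZlow := (hRUB (blockMat R Zt) hZrank).1
  rw [hZfro] at hZlow
  -- sum decomposition of R
  have hRsum : blockMat R Zt + ∑ j ∈ Finset.range n, blockMat R (Tt (j + 1)) = R := by
    have h := blockMat_partition R (Finset.range (n + 1)) tfam hpart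
    rw [Finset.sum_range_succ'] at h
    have h1 : ∀ j, blockMat R (tfam (j + 1)) = blockMat R (Tt (j + 1)) := by
      intro j
      simp only [htfamdef, Nat.succ_ne_zero, if_false]
    have h2 : blockMat R (tfam 0) = blockMat R Zt := by
      simp only [htfamdef, if_pos rfl]
    rw [Finset.sum_congr rfl (fun j _ => h1 j), h2] at h
    rw [add_comm]
    exact h
  have hAZ : A (blockMat R Zt) = - ∑ j ∈ Finset.range n, A (blockMat R (Tt (j + 1))) := by
    apply eq_neg_of_add_eq_zero_left
    rw [← map_sum, ← map_add, hRsum, hker]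
  -- per-block RUB upper bounds
  have hTcard : ∀ j : ℕ, (Tt (j + 1)).card ≤ s := by
    intro j
    have h := posSet_card_le n (r + (j + 1) * s) (r + ((j + 1) + 1) * s)
    have heq : r + ((j + 1) + 1) * s - (r + (j + 1) * s) = s := by
      rw [Nat.add_sub_add_left, show ((j+1) + 1) * s = (j+1) * s + s from by ring,
        Nat.add_sub_cancel_left]
    exact le_trans h (le_of_eq heq)
  have hWrank : ∀ j : ℕ, (blockMat R (Tt (j + 1))).rank ≤ r + s := by
    intro j
    refine le_trans (blockMat_rank_le R _) (le_trans (hTcard j) (Nat.le_add_left s r))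
  have hWfro : ∀ j : ℕ, ∑ jj, singVal (blockMat R (Tt (j + 1))) jj ^ (2:ℝ) = UU (j + 1) :=
    fun j => blockMat_frob R (Tt (j + 1))
  have hWup : ∀ j : ℕ, (∑ jj, |A (blockMat R (Tt (j + 1))) jj| ^ q) / L ≤
      C₂ * (UU (j + 1)) ^ (q / 2) := by
    intro j
    have h := (hRUB (blockMat R (Tt (j + 1))) (hWrank j)).2
    rwa [hWfro j] at h
  -- the ℓq triangle inequality step
  have hstep1 : (∑ jj, |A (blockMat R Zt) jj| ^ q) ≤
      ∑ j ∈ Finset.range n, ∑ jj, |A (blockMat R (Tt (j + 1))) jj| ^ q := by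
    calc (∑ jj, |A (blockMat R Zt) jj| ^ q)
        = ∑ jj, |∑ j ∈ Finset.range n, A (blockMat R (Tt (j + 1))) jj| ^ q := by
          refine Finset.sum_congr rfl fun jj _ => ?_
          rw [hAZ, Pi.neg_apply, abs_neg, Finset.sum_apply]
      _ ≤ ∑ jj, ∑ j ∈ Finset.range n, |A (blockMat R (Tt (j + 1))) jj| ^ q :=
          Finset.sum_le_sum fun jj _ => abs_sum_rpow_le _ _ hq0 hq1
      _ = ∑ j ∈ Finset.range n, ∑ jj, |A (blockMat R (Tt (j + 1))) jj| ^ q :=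
          Finset.sum_comm
  -- per-block singular value comparison
  have hblock : ∀ j : ℕ, (UU (j + 1)) ^ (q / 2) ≤
      (s:ℝ) ^ (q/2 - q/p) * (TT j) ^ (q/p) := by
    intro j
    have hUU0 : 0 ≤ UU (j + 1) := Finset.sum_nonneg fun k _ => Real.rpow_nonneg (hσ0 k) _
    have hsR : (0:ℝ) < s := by exact_mod_cast hs0
    by_cases hne : (Tt (j + 1)).Nonempty
    · obtain ⟨k0, hk0⟩ := hne
      have hk0' := mem_posSet.mp hk0
      have hbn : r + (j + 1) * s ≤ n := le_of_lt (lt_of_le_of_lt hk0'.1 k0.isLt)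
      have hfull : (Tt j).card = s := by
        rw [hTtdef]
        rw [posSet_card_eq hbn, Nat.add_sub_add_left,
          show (j + 1) * s = j * s + s from by ring, Nat.add_sub_cancel_left]
      have hkb : ∀ k ∈ Tt (j + 1), σ k ^ p * s ≤ TT j := by
        intro k hk
        have hk' := mem_posSet.mp hk
        have hlb : ∀ k' ∈ Tt j, σ k ^ p ≤ σ k' ^ p := by
          intro k' hk'2
          have h2 := mem_posSet.mp hk'2
          have hle : k' ≤ k := by
            rw [Fin.le_def]
            calc (k':ℕ) ≤ r + (j+1) * s := le_of_lt h2.2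
              _ ≤ (k:ℕ) := hk'.1
          exact Real.rpow_le_rpow (hσ0 k) (singVal_anti R hle) hp.le
        have h := Finset.card_nsmul_le_sum (Tt j) (fun k' => σ k' ^ p) (σ k ^ p) hlb
        rw [hfull, nsmul_eq_mul] at h
        calc σ k ^ p * s = (s:ℝ) * σ k ^ p := by ring
          _ ≤ TT j := h
      have hk2 : ∀ k ∈ Tt (j + 1), σ k ^ (2:ℝ) ≤ (TT j / s) ^ (2/p) := by
        intro k hk
        have h1 : σ k ^ p ≤ TT j / s := (le_div_iff₀ hsR).mpr (hkb k hk)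
        have h2 : σ k ^ (2:ℝ) = (σ k ^ p) ^ (2/p) := by
          rw [← Real.rpow_mul (hσ0 k)]
          congr 1
          field_simp
        rw [h2]
        exact Real.rpow_le_rpow (Real.rpow_nonneg (hσ0 k) _) h1
          (div_nonneg (by norm_num) hp.le)
      have hUUle : UU (j + 1) ≤ (s:ℝ) * (TT j / s) ^ (2/p) := by
        have h := Finset.sum_le_card_nsmul (Tt (j + 1)) (fun k => σ k ^ (2:ℝ))
          ((TT j / s) ^ (2/p)) hk2
        rw [nsmul_eq_mul] at h
        refine le_trans h (mul_le_mul_of_nonneg_right ?_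
          (Real.rpow_nonneg (div_nonneg (hTT0 j) hsR.le) _))
        exact_mod_cast hTcard j
      have hTs0 : (0:ℝ) ≤ TT j / s := div_nonneg (hTT0 j) hsR.le
      calc (UU (j + 1)) ^ (q / 2) ≤ ((s:ℝ) * (TT j / s) ^ (2/p)) ^ (q/2) :=
            Real.rpow_le_rpow hUU0 hUUle (div_nonneg hq0.le (by norm_num))
        _ = (s:ℝ) ^ (q/2) * ((TT j / s) ^ (2/p)) ^ (q/2) :=
            Real.mul_rpow hsR.le (Real.rpow_nonneg hTs0 _)
        _ = (s:ℝ) ^ (q/2) * (TT j / s) ^ (q/p) := by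
            rw [← Real.rpow_mul hTs0]
            congr 1
            field_simp
        _ = (s:ℝ) ^ (q/2) * ((TT j) ^ (q/p) / (s:ℝ) ^ (q/p)) := by
            rw [Real.div_rpow (hTT0 j) hsR.le]
        _ = (s:ℝ) ^ (q/2 - q/p) * (TT j) ^ (q/p) := by
            rw [Real.rpow_sub hsR]
            ring
    · have hUUzero : UU (j + 1) = 0 := by
        show (∑ k ∈ Tt (j + 1), σ k ^ (2:ℝ)) = 0
        rw [Finset.not_nonempty_iff_eq_empty.mp hne, Finset.sum_empty]
      rw [hUUzero, Real.zero_rpow (div_pos hq0 two_pos).ne']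
      exact mul_nonneg (Real.rpow_nonneg hsR.le _) (Real.rpow_nonneg (hTT0 j) _)
  -- head power-mean bound
  have hhead : headP R r p ≤ (r:ℝ) ^ (1 - p/2) * G ^ (p/2) := by
    have hrR : (0:ℝ) < r := by exact_mod_cast hr
    have h1 : headP R r p = ∑ k ∈ posSet n 0 r, (σ k ^ (2:ℝ)) ^ (p/2) := by
      rw [hheadP_eq]
      refine Finset.sum_congr rfl fun k _ => ?_
      rw [← Real.rpow_mul (hσ0 k)]
      congr 1
      ring
    rw [h1]
    have h2 := sum_rpow_le_card_mul (posSet n 0 r) (fun k => σ k ^ (2:ℝ))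
      (fun k _ => Real.rpow_nonneg (hσ0 k) _) (half_pos hp) (by linarith : p/2 ≤ 1)
    refine le_trans h2 (mul_le_mul_of_nonneg_right ?_ (Real.rpow_nonneg hG0 _))
    apply Real.rpow_le_rpow (Nat.cast_nonneg _)
    · have := posSet_card_le n 0 r
      have h3 : (posSet n 0 r).card ≤ r := by omega
      exact_mod_cast h3
    · linarith
  -- assemble the main chain
  have hLpos : (0:ℝ) < L := by exact_mod_cast hL
  have hqp1 : (1:ℝ) ≤ q / p := (one_le_div hp).mpr hpq
  have hrR : (0:ℝ) < r := by exact_mod_cast hr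
  have hsR : (0:ℝ) < s := by exact_mod_cast hs0
  have hmain : C₁ * F ^ (q/2) ≤
      C₂ * ((s:ℝ) ^ (q/2 - q/p) * (r:ℝ) ^ (q/p - q/2)) * F ^ (q/2) := by
    calc C₁ * F ^ (q/2) ≤ (∑ jj, |A (blockMat R Zt) jj| ^ q) / L := hZlow
      _ ≤ (∑ j ∈ Finset.range n, ∑ jj, |A (blockMat R (Tt (j + 1))) jj| ^ q) / L :=
          (div_le_div_iff_of_pos_right hLpos).mpr hstep1
      _ = ∑ j ∈ Finset.range n, (∑ jj, |A (blockMat R (Tt (j + 1))) jj| ^ q) / L :=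
          Finset.sum_div _ _ _
      _ ≤ ∑ j ∈ Finset.range n, C₂ * (UU (j + 1)) ^ (q/2) :=
          Finset.sum_le_sum fun j _ => hWup j
      _ ≤ ∑ j ∈ Finset.range n, C₂ * ((s:ℝ) ^ (q/2 - q/p) * (TT j) ^ (q/p)) :=
          Finset.sum_le_sum fun j _ => mul_le_mul_of_nonneg_left (hblock j) hC₂.le
      _ = C₂ * (s:ℝ) ^ (q/2 - q/p) * ∑ j ∈ Finset.range n, (TT j) ^ (q/p) := by
          rw [Finset.mul_sum]
          refine Finset.sum_congr rfl fun j _ => by ring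
      _ ≤ C₂ * (s:ℝ) ^ (q/2 - q/p) * (∑ j ∈ Finset.range n, TT j) ^ (q/p) := by
          refine mul_le_mul_of_nonneg_left ?_ (mul_nonneg hC₂.le (Real.rpow_nonneg hsR.le _))
          exact sum_rpow_le_rpow_sum _ _ (fun j _ => hTT0 j) hqp1
      _ = C₂ * (s:ℝ) ^ (q/2 - q/p) * (tailP R r p) ^ (q/p) := by rw [htailP]
      _ ≤ C₂ * (s:ℝ) ^ (q/2 - q/p) * (headP R r p) ^ (q/p) := by
          refine mul_le_mul_of_nonneg_left ?_ (mul_nonneg hC₂.le (Real.rpow_nonneg hsR.le _))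
          exact Real.rpow_le_rpow htailP0 hcone (div_nonneg hq0.le hp.le)
      _ ≤ C₂ * (s:ℝ) ^ (q/2 - q/p) * ((r:ℝ) ^ (1 - p/2) * G ^ (p/2)) ^ (q/p) := by
          refine mul_le_mul_of_nonneg_left ?_ (mul_nonneg hC₂.le (Real.rpow_nonneg hsR.le _))
          exact Real.rpow_le_rpow hheadP0 hhead (div_nonneg hq0.le hp.le)
      _ = C₂ * (s:ℝ) ^ (q/2 - q/p) * ((r:ℝ) ^ (q/p - q/2) * G ^ (q/2)) := by
          rw [Real.mul_rpow (Real.rpow_nonneg hrR.le _) (Real.rpow_nonneg hG0 _),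
            ← Real.rpow_mul hrR.le, ← Real.rpow_mul hG0,
            show (1 - p/2) * (q/p) = q/p - q/2 from by field_simp [hp.ne'],
            show (p/2) * (q/p) = q/2 from by field_simp [hp.ne']]
      _ ≤ C₂ * (s:ℝ) ^ (q/2 - q/p) * ((r:ℝ) ^ (q/p - q/2) * F ^ (q/2)) := by
          refine mul_le_mul_of_nonneg_left ?_ (mul_nonneg hC₂.le (Real.rpow_nonneg hsR.le _))
          refine mul_le_mul_of_nonneg_left ?_ (Real.rpow_nonneg hrR.le _)
          refine Real.rpow_le_rpow hG0 ?_ (div_nonneg hq0.le (by norm_num))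
          refine Finset.sum_le_sum_of_subset_of_nonneg ?_
            (fun k _ _ => Real.rpow_nonneg (hσ0 k) _)
          intro k hk
          rw [mem_posSet] at hk ⊢
          omega
      _ = C₂ * ((s:ℝ) ^ (q/2 - q/p) * (r:ℝ) ^ (q/p - q/2)) * F ^ (q/2) := by ring
  -- identify the constant
  have hconst : (s:ℝ) ^ (q/2 - q/p) * (r:ℝ) ^ (q/p - q/2) =
      (((s:ℝ) / r) ^ ((1/p - 1/2) * q))⁻¹ := by
    have h1 : ((s:ℝ) / r) ^ ((1/p - 1/2) * q) = (s:ℝ) ^ (q/p - q/2) / (r:ℝ) ^ (q/p - q/2) := by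
      rw [show (1/p - 1/2) * q = q/p - q/2 from by ring, Real.div_rpow hsR.le hrR.le]
    rw [h1, inv_div, eq_div_iff (Real.rpow_pos_of_pos hsR (q/p - q/2)).ne']
    calc (s:ℝ) ^ (q/2 - q/p) * (r:ℝ) ^ (q/p - q/2) * (s:ℝ) ^ (q/p - q/2)
        = (s:ℝ) ^ (q/2 - q/p + (q/p - q/2)) * (r:ℝ) ^ (q/p - q/2) := by
          rw [Real.rpow_add hsR]; ring
      _ = (r:ℝ) ^ (q/p - q/2) := by
          rw [show q/2 - q/p + (q/p - q/2) = 0 from by ring, Real.rpow_zero, one_mul]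
  -- conclude
  rcases hF0.eq_or_lt with hF | hF
  · -- F = 0 : all singular values vanish
    have hz : ∀ k ∈ Zt, σ k = 0 := by
      intro k hk
      have h := (Finset.sum_eq_zero_iff_of_nonneg
        (fun k _ => Real.rpow_nonneg (hσ0 k) (2:ℝ))).mp hF.symm k hk
      exact (Real.rpow_eq_zero (hσ0 k) (by norm_num)).mp h
    have hheadzero : headP R r p = 0 := by
      rw [hheadP_eq]
      apply Finset.sum_eq_zero
      intro k hk
      have hk' := mem_posSet.mp hk
      have : k ∈ Zt := by
        rw [hZtdef, mem_posSet]
        omega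
      rw [hz k this, Real.zero_rpow hp.ne']
    have htailzero : tailP R r p = 0 := le_antisymm (hheadzero ▸ hcone) htailP0
    have hallzero : ∀ k : Fin n, σ k = 0 := by
      intro k
      by_cases hk : (k:ℕ) < r
      · refine hz k ?_
        rw [hZtdef, mem_posSet]
        omega
      · have hmem : k ∈ Finset.univ.filter (fun j : Fin n => r ≤ (j : ℕ)) := by
          simp; omega
        have h := (Finset.sum_eq_zero_iff_of_nonneg
          (fun k _ => Real.rpow_nonneg (hσ0 k) p)).mp htailzero k hmem
        exact (Real.rpow_eq_zero (hσ0 k) hp.ne').mp h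
    have htr : (Rᴴ * R).trace = 0 := by
      rw [← sum_singVal_sq]
      exact Finset.sum_eq_zero fun k _ => by
        rw [show singVal R k = σ k from rfl, hallzero k, Real.zero_rpow (by norm_num)]
    have htr2 : ∑ j : Fin n, ∑ i : Fin m, R i j * R i j = 0 := by
      rw [← htr]
      simp [Matrix.trace, Matrix.diag, Matrix.mul_apply, Matrix.conjTranspose_apply]
    have hentry : ∀ (i : Fin m) (j : Fin n), R i j = 0 := by
      intro i j
      have h2 := (Finset.sum_eq_zero_iff_of_nonneg
        (fun j _ => Finset.sum_nonneg fun i _ => mul_self_nonneg (R i j))).mp htr2 j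
        (Finset.mem_univ j)
      have h3 := (Finset.sum_eq_zero_iff_of_nonneg
        (fun i _ => mul_self_nonneg (R i j))).mp h2 i (Finset.mem_univ i)
      exact mul_self_eq_zero.mp h3
    ext i j
    rw [hentry i j, Matrix.zero_apply]
  · -- F > 0 : contradiction with the ratio assumption
    exfalso
    have hFq : 0 < F ^ (q/2) := Real.rpow_pos_of_pos hF _
    set t := ((s:ℝ) / r) ^ ((1/p - 1/2) * q) with htdef
    have ht0 : 0 < t := Real.rpow_pos_of_pos (by positivity) _
    rw [hconst] at hmain
    have hle : C₁ ≤ C₂ * t⁻¹ := le_of_mul_le_mul_right (by linarith [hmain]) hFq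
    have h2 : C₁ * t ≤ C₂ := by
      rw [← div_eq_mul_inv] at hle
      exact (le_div_iff₀ ht0).mp hle
    have h3 : t ≤ C₂ / C₁ := (le_div_iff₀ hC₁).mpr (by linarith [mul_comm C₁ t])
    exact absurd hratio (not_lt.mpr h3)
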